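/- Let f : ℝ³ → ℝ⁴ be defined by f(x) = ((1 − ‖x‖²)·e₀ + 2·ĵ(x))/(1 + ‖x‖²), where e₀ is the first standard basis vector of ℝ⁴ and ĵ : ℝ³ → ℝ⁴ is the isometric embedding onto the orthogonal complement of e₀ (the last three coordinates). Then f is differentiable at every x ∈ ℝ³, and for every x, v ∈ ℝ³ the Fréchet derivative satisfies ‖(fderiv f x) v‖² = 4‖v‖²/(1 + ‖x‖²)²; that is, the round metric on S³ pulls back under inverse stereographic projection to the conformal metric 4 dx²/(1 + ‖x‖²)². -/

import Mathlib

/-- The isometric embedding of ℝ³ onto the last three coordinates of ℝ⁴. -/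
noncomputable def jEmb (x : EuclideanSpace ℝ (Fin 3)) : EuclideanSpace ℝ (Fin 4) :=
  (WithLp.equiv 2 (Fin 4 → ℝ)).symm (Fin.cons 0 (WithLp.equiv 2 (Fin 3 → ℝ) x))

open scoped RealInnerProductSpace

lemma jEmb_apply_zero (x : EuclideanSpace ℝ (Fin 3)) : jEmb x 0 = 0 := rfl

lemma jEmb_apply_succ (x : EuclideanSpace ℝ (Fin 3)) (i : Fin 3) :
    jEmb x i.succ = x i := by
  simp [jEmb]

lemma jEmb_add (x y : EuclideanSpace ℝ (Fin 3)) : jEmb (x + y) = jEmb x + jEmb y := by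
  ext i
  refine Fin.cases ?_ (fun j => ?_) i <;>
    simp [jEmb_apply_zero, jEmb_apply_succ]

lemma jEmb_smul (c : ℝ) (x : EuclideanSpace ℝ (Fin 3)) : jEmb (c • x) = c • jEmb x := by
  ext i
  refine Fin.cases ?_ (fun j => ?_) i <;>
    simp [jEmb_apply_zero, jEmb_apply_succ]

lemma inner_jEmb (x y : EuclideanSpace ℝ (Fin 3)) : ⟪jEmb x, jEmb y⟫ = ⟪x, y⟫ := by
  simp only [PiLp.inner_apply, RCLike.inner_apply, conj_trivial]
  rw [Fin.sum_univ_succ]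
  simp [jEmb_apply_zero, jEmb_apply_succ]

lemma inner_e0_jEmb (x : EuclideanSpace ℝ (Fin 3)) :
    ⟪(EuclideanSpace.single 0 1 : EuclideanSpace ℝ (Fin 4)), jEmb x⟫ = 0 := by
  rw [EuclideanSpace.inner_single_left]
  simp [jEmb_apply_zero]

/-- `jEmb` as a continuous linear map. -/
noncomputable def Jc : EuclideanSpace ℝ (Fin 3) →L[ℝ] EuclideanSpace ℝ (Fin 4) :=
  LinearMap.toContinuousLinearMap
    { toFun := jEmb, map_add' := jEmb_add, map_smul' := jEmb_smul }

lemma Jc_apply (x : EuclideanSpace ℝ (Fin 3)) : Jc x = jEmb x := rfl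

theorem stereographic_conformal_metric_sphere
    (e₀ : EuclideanSpace ℝ (Fin 4)) (he₀ : e₀ = EuclideanSpace.single 0 1)
    (f : EuclideanSpace ℝ (Fin 3) → EuclideanSpace ℝ (Fin 4))
    (hf : ∀ x, f x = (1 + ‖x‖ ^ 2)⁻¹ • ((1 - ‖x‖ ^ 2) • e₀ + (2 : ℝ) • jEmb x)) :
    ∀ x : EuclideanSpace ℝ (Fin 3), DifferentiableAt ℝ f x ∧
      ∀ v : EuclideanSpace ℝ (Fin 3),
        ‖fderiv ℝ f x v‖ ^ 2 = 4 * ‖v‖ ^ 2 / (1 + ‖x‖ ^ 2) ^ 2 := by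
  intro x
  have ht : (1 : ℝ) + ‖x‖ ^ 2 ≠ 0 := by positivity
  have hfeq : f = fun y => (1 + ‖y‖ ^ 2)⁻¹ • ((1 - ‖y‖ ^ 2) • e₀ + (2 : ℝ) • Jc y) :=
    funext fun y => hf y
  have h1 : HasFDerivAt (fun y : EuclideanSpace ℝ (Fin 3) => 1 + ‖y‖ ^ 2)
      (2 • innerSL ℝ x) x := (hasStrictFDerivAt_norm_sq x).hasFDerivAt.const_add 1
  have ha : HasFDerivAt (fun y : EuclideanSpace ℝ (Fin 3) => (1 + ‖y‖ ^ 2)⁻¹)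
      ((-((1 + ‖x‖ ^ 2) ^ 2)⁻¹) • (2 • innerSL ℝ x)) x :=
    (hasDerivAt_inv ht).comp_hasFDerivAt x h1
  have hb1 : HasFDerivAt (fun y : EuclideanSpace ℝ (Fin 3) => 1 - ‖y‖ ^ 2)
      (-(2 • innerSL ℝ x)) x := (hasStrictFDerivAt_norm_sq x).hasFDerivAt.const_sub 1
  have hb : HasFDerivAt (fun y : EuclideanSpace ℝ (Fin 3) =>
        (1 - ‖y‖ ^ 2) • e₀ + (2 : ℝ) • Jc y)
      ((-(2 • innerSL ℝ x)).smulRight e₀ + (2 : ℝ) • Jc) x :=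
    (hb1.smul_const e₀).add ((Jc.hasFDerivAt).const_smul (2 : ℝ))
  have hD : HasFDerivAt f
      ((1 + ‖x‖ ^ 2)⁻¹ • ((-(2 • innerSL ℝ x)).smulRight e₀ + (2 : ℝ) • Jc) +
        ((-((1 + ‖x‖ ^ 2) ^ 2)⁻¹) • (2 • innerSL ℝ x)).smulRight
          ((1 - ‖x‖ ^ 2) • e₀ + (2 : ℝ) • Jc x)) x := by
    rw [hfeq]; exact ha.smul hb
  refine ⟨hD.differentiableAt, fun v => ?_⟩
  rw [hD.fderiv]
  have key : ∀ (a : ℝ) (u : EuclideanSpace ℝ (Fin 3)),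
      ‖a • e₀ + jEmb u‖ ^ 2 = a ^ 2 + ‖u‖ ^ 2 := by
    intro a u
    have h00 : ⟪e₀, e₀⟫ = 1 := by
      rw [he₀, EuclideanSpace.inner_single_left]; simp
    have h0u : ⟪e₀, jEmb u⟫ = 0 := by rw [he₀]; exact inner_e0_jEmb u
    rw [← real_inner_self_eq_norm_sq, inner_add_add_self, real_inner_smul_left,
      real_inner_smul_right, real_inner_smul_left, h00, h0u, inner_jEmb,
      real_inner_self_eq_norm_sq,
      real_inner_comm (a • e₀) (jEmb u), real_inner_smul_left, h0u]
    ring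
  have hpq : ∀ p q : ℝ, ‖p • v + q • x‖ ^ 2 =
      p ^ 2 * ‖v‖ ^ 2 + 2 * p * q * ⟪x, v⟫ + q ^ 2 * ‖x‖ ^ 2 := by
    intro p q
    rw [← real_inner_self_eq_norm_sq, inner_add_add_self, real_inner_smul_left,
      real_inner_smul_right, real_inner_smul_left, real_inner_smul_right,
      real_inner_smul_left, real_inner_smul_right, real_inner_self_eq_norm_sq,
      real_inner_self_eq_norm_sq, real_inner_comm v x, norm_smul]
    simp only [Real.norm_eq_abs, mul_pow, sq_abs]
    ring
  have hDv : ((1 + ‖x‖ ^ 2)⁻¹ • ((-(2 • innerSL ℝ x)).smulRight e₀ + (2 : ℝ) • Jc) +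
        ((-((1 + ‖x‖ ^ 2) ^ 2)⁻¹) • (2 • innerSL ℝ x)).smulRight
          ((1 - ‖x‖ ^ 2) • e₀ + (2 : ℝ) • Jc x)) v =
      ((1 + ‖x‖ ^ 2)⁻¹ * (-(2 * ⟪x, v⟫)) +
        -((1 + ‖x‖ ^ 2) ^ 2)⁻¹ * (2 * ⟪x, v⟫) * (1 - ‖x‖ ^ 2)) • e₀ +
      jEmb (((1 + ‖x‖ ^ 2)⁻¹ * 2) • v +
        (-((1 + ‖x‖ ^ 2) ^ 2)⁻¹ * (2 * ⟪x, v⟫) * 2) • x) := by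
    simp only [ContinuousLinearMap.add_apply, ContinuousLinearMap.smul_apply,
      ContinuousLinearMap.smulRight_apply, ContinuousLinearMap.coe_smul',
      ContinuousLinearMap.neg_apply, Pi.smul_apply, Pi.neg_apply, innerSL_apply_apply,
      Jc_apply, jEmb_add, jEmb_smul, smul_eq_mul]
    module
  rw [hDv, key, hpq]
  field_simp
  ring
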